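/- Let n ≥ 2 be a natural number. The n-th approximation number of the summation operator σ : ℓ¹ → c equals 1/2, i.e., the infimum of ‖σ − F‖ over all bounded linear operators F : ℓ¹ → c with rank F < n equals 1/2. -/

import Mathlib

set_option synthInstance.maxHeartbeats 1000000
set_option maxHeartbeats 1000000


noncomputable section

/-- The space `ℓ¹` of absolutely summable real sequences. -/
abbrev ell1 : Type := lp (fun _ : ℕ => ℝ) 1

/-- The space `ℓ^∞` of bounded real sequences with the supremum norm. -/
abbrev ellInf : Type := lp (fun _ : ℕ => ℝ) ⊤

/-- The subspace of `ℓ^∞` consisting of convergent sequences. -/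
def convSubspace : Submodule ℝ ellInf where
  carrier := {x | ∃ L : ℝ, Filter.Tendsto (fun k => x k) Filter.atTop (nhds L)}
  add_mem' := by
    rintro x y ⟨L, hL⟩ ⟨M, hM⟩
    exact ⟨L + M, by simpa [lp.coeFn_add, Pi.add_apply] using hL.add hM⟩
  zero_mem' :=
    ⟨0, by simpa [lp.coeFn_zero] using
      (tendsto_const_nhds : Filter.Tendsto (fun _ : ℕ => (0:ℝ)) _ _)⟩
  smul_mem' := by
    rintro c x ⟨L, hL⟩
    exact ⟨c * L, by simpa [lp.coeFn_smul, Pi.smul_apply, smul_eq_mul] using hL.const_mul c⟩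

/-- The space `c` of convergent real sequences, normed by the supremum norm. -/
abbrev cSpace : Type := ↥convSubspace

/-- `σ` is the summation operator: `σ(x)ₖ = ∑_{j=1}^k x_j` (`0`-indexed here). -/
def IsSummation (σ : ell1 →L[ℝ] cSpace) : Prop :=
  ∀ x : ell1, ∀ k : ℕ, (↑(σ x) : ellInf) k = ∑ j ∈ Finset.range (k + 1), x j

/-! ### Auxiliary lemmas -/

lemma ell1_summable_norm (x : ell1) : Summable fun j => ‖x j‖ := by
  simpa using (lp.memℓp x).summable (by norm_num : (0:ℝ) < (1 : ENNReal).toReal)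

lemma ell1_summable (x : ell1) : Summable fun j => x j :=
  (ell1_summable_norm x).of_norm

lemma ell1_norm_eq (x : ell1) : ‖x‖ = ∑' j, ‖x j‖ := by
  simpa using lp.norm_eq_tsum_rpow (p := 1) (by norm_num) x

/-- The summation functional on `ℓ¹`. -/
def sumF : ell1 →L[ℝ] ℝ :=
  LinearMap.mkContinuous
    { toFun := fun x => ∑' j, x j
      map_add' := by
        intro x y
        have hx := ell1_summable x
        have hy := ell1_summable y
        rw [← Summable.tsum_add hx hy]
        exact tsum_congr fun j => by simp [lp.coeFn_add]
      map_smul' := by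
        intro c x
        rw [RingHom.id_apply, ← tsum_const_smul'' (f := fun j => x j) c]
        exact tsum_congr fun j => by simp [lp.coeFn_smul] }
    1 (fun x => by
      simpa [ell1_norm_eq x] using norm_tsum_le_tsum_norm (ell1_summable_norm x))

lemma sumF_apply (x : ell1) : sumF x = ∑' j, x j := rfl

/-- The constant sequence `1` as an element of `c`. -/
def constOne : cSpace :=
  ⟨(⟨fun _ => (1:ℝ), memℓp_infty ⟨1, by rintro r ⟨i, rfl⟩; simp⟩⟩ : ellInf),
    ⟨1, tendsto_const_nhds⟩⟩

lemma constOne_apply (k : ℕ) : ((constOne : cSpace) : ellInf) k = 1 := rfl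

/-- The rank-one approximant. -/
def Gop : ell1 →L[ℝ] cSpace := sumF.smulRight (((1:ℝ)/2) • constOne)

lemma Gop_apply (x : ell1) (k : ℕ) :
    ((Gop x : cSpace) : ellInf) k = (1/2) * ∑' j, x j := by
  show ((((sumF x) • (((1:ℝ)/2) • constOne) : cSpace) : ellInf)) k = _
  rw [Submodule.coe_smul, Submodule.coe_smul, lp.coeFn_smul, Pi.smul_apply,
    lp.coeFn_smul, Pi.smul_apply, constOne_apply, sumF_apply]
  simp [mul_comm]

lemma key_ineq (x : ell1) (k : ℕ) :
    |∑ j ∈ Finset.range (k+1), x j - (1/2) * ∑' j, x j| ≤ (1/2) * ‖x‖ := by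
  classical
  set s : Finset ℕ := Finset.range (k+1)
  have hsum : (∑ j ∈ s, x j) + ∑' j : ↑((s : Set ℕ)ᶜ), x j = ∑' j, x j :=
    Summable.sum_add_tsum_compl (ell1_summable x)
  have hnormsum : (∑ j ∈ s, ‖x j‖) + ∑' j : ↑((s : Set ℕ)ᶜ), ‖x j‖ = ∑' j, ‖x j‖ :=
    Summable.sum_add_tsum_compl (ell1_summable_norm x)
  have h1 : |∑ j ∈ s, x j| ≤ ∑ j ∈ s, ‖x j‖ := by
    simpa using Finset.abs_sum_le_sum_abs (fun j => x j) s
  have h2 : |∑' j : ↑((s : Set ℕ)ᶜ), x j| ≤ ∑' j : ↑((s : Set ℕ)ᶜ), ‖x j‖ := by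
    simpa using norm_tsum_le_tsum_norm ((ell1_summable_norm x).subtype _)
  have key : ∑ j ∈ s, x j - (1/2) * ∑' j, x j
      = (1/2) * ((∑ j ∈ s, x j) - ∑' j : ↑((s : Set ℕ)ᶜ), x j) := by
    rw [← hsum]; ring
  rw [key, ell1_norm_eq, ← hnormsum, abs_mul]
  have : |(∑ j ∈ s, x j) - ∑' j : ↑((s : Set ℕ)ᶜ), x j|
      ≤ (∑ j ∈ s, ‖x j‖) + ∑' j : ↑((s : Set ℕ)ᶜ), ‖x j‖ :=
    (abs_sub _ _).trans (add_le_add h1 h2)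
  calc |(1:ℝ)/2| * |(∑ j ∈ s, x j) - ∑' j : ↑((s : Set ℕ)ᶜ), x j|
      ≤ |(1:ℝ)/2| * ((∑ j ∈ s, ‖x j‖) + ∑' j : ↑((s : Set ℕ)ᶜ), ‖x j‖) := by
        exact mul_le_mul_of_nonneg_left this (abs_nonneg _)
    _ = (1/2) * ((∑ j ∈ s, ‖x j‖) + ∑' j : ↑((s : Set ℕ)ᶜ), ‖x j‖) := by norm_num

lemma cSpace_norm (y : cSpace) : ‖y‖ = ‖(y : ellInf)‖ := rfl

lemma Gop_norm_le (σ : ell1 →L[ℝ] cSpace) (hσ : IsSummation σ) : ‖σ - Gop‖ ≤ 1/2 := by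
  refine ContinuousLinearMap.opNorm_le_bound _ (by norm_num) fun x => ?_
  rw [ContinuousLinearMap.sub_apply, cSpace_norm]
  refine lp.norm_le_of_forall_le (by positivity) fun k => ?_
  have : (((σ x - Gop x : cSpace) : ellInf) : ℕ → ℝ) k
      = (↑(σ x) : ellInf) k - (↑(Gop x) : ellInf) k := by
    rw [Submodule.coe_sub, lp.coeFn_sub, Pi.sub_apply]
  rw [Real.norm_eq_abs, this, hσ x k, Gop_apply]
  exact key_ineq x k

/-- Standard basis vectors of `ℓ¹`. -/
def e (j : ℕ) : ell1 := lp.single 1 j (1:ℝ)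

lemma e_norm (j : ℕ) : ‖e j‖ = 1 := by
  simpa [e] using lp.norm_single (p := 1) (E := fun _ : ℕ => ℝ) (by norm_num) j (1:ℝ)

lemma e_apply (j i : ℕ) : (e j : ℕ → ℝ) i = if i = j then 1 else 0 := by
  by_cases h : i = j
  · subst h; simp [e, lp.single_apply_self]
  · simp [e, lp.single_apply_ne 1 j _ h, h]

lemma sigma_e_sub (σ : ell1 →L[ℝ] cSpace) (hσ : IsSummation σ) {j k : ℕ} (hjk : j < k) :
    (↑(σ (e j - e k)) : ellInf) j = 1 := by
  rw [hσ (e j - e k) j]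
  have : ∀ i, ((e j - e k : ell1) : ℕ → ℝ) i
      = (if i = j then (1:ℝ) else 0) - (if i = k then 1 else 0) := by
    intro i; rw [lp.coeFn_sub, Pi.sub_apply, e_apply, e_apply]
  rw [Finset.sum_congr rfl fun i _ => this i, Finset.sum_sub_distrib,
    Finset.sum_ite_eq' (Finset.range (j+1)) j fun _ => (1:ℝ),
    Finset.sum_ite_eq' (Finset.range (j+1)) k fun _ => (1:ℝ)]
  simp [Finset.mem_range, Nat.lt_succ_iff, hjk.not_ge]

/-- In a finite-dimensional subspace, a bounded sequence has two distinct terms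
arbitrarily close together. -/
lemma exists_lt_norm_sub_lt {E : Type*} [NormedAddCommGroup E] [NormedSpace ℝ E]
    (V : Submodule ℝ E) [FiniteDimensional ℝ V] (g : ℕ → E) (hmem : ∀ j, g j ∈ V)
    (C : ℝ) (hC : ∀ j, ‖g j‖ ≤ C) {ε : ℝ} (hε : 0 < ε) :
    ∃ j k, j < k ∧ ‖g j - g k‖ < ε := by
  set g' : ℕ → V := fun j => ⟨g j, hmem j⟩ with hg'
  have hball : ∀ j, g' j ∈ Metric.closedBall (0 : V) C := fun j => by
    rw [Metric.mem_closedBall, dist_zero_right]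
    calc ‖g' j‖ = ‖g j‖ := rfl
      _ ≤ C := hC j
  obtain ⟨a, -, φ, hφ, hconv⟩ := (isCompact_closedBall (0 : V) C).tendsto_subseq hball
  have hcauchy := hconv.cauchySeq
  rw [Metric.cauchySeq_iff] at hcauchy
  obtain ⟨N, hN⟩ := hcauchy ε hε
  refine ⟨φ N, φ (N+1), hφ (Nat.lt_succ_self N), ?_⟩
  have h := hN N le_rfl (N+1) (Nat.le_succ N)
  rw [dist_eq_norm] at h
  calc ‖g (φ N) - g (φ (N+1))‖ = ‖((g' (φ N) - g' (φ (N+1)) : V) : E)‖ := by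
        rw [Submodule.coe_sub]
    _ = ‖g' (φ N) - g' (φ (N+1))‖ := Submodule.norm_coe _
    _ < ε := h

set_option maxHeartbeats 1000000 in
lemma lower_bound (σ : ell1 →L[ℝ] cSpace) (hσ : IsSummation σ)
    (F : ell1 →L[ℝ] cSpace)
    (hF : LinearMap.rank (F : ell1 →ₗ[ℝ] cSpace) < Cardinal.aleph0) :
    1/2 ≤ ‖σ - F‖ := by
  haveI : FiniteDimensional ℝ (LinearMap.range (F : ell1 →ₗ[ℝ] cSpace)) :=
    Module.rank_lt_aleph0_iff.mp hF
  refine le_of_forall_pos_le_add fun ε hε => ?_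
  obtain ⟨j, k, hjk, hclose⟩ :=
    exists_lt_norm_sub_lt (LinearMap.range (F : ell1 →ₗ[ℝ] cSpace))
      (fun j => F (e j)) (fun j => LinearMap.mem_range_self _ _) ‖F‖
      (fun j => by
        calc ‖F (e j)‖ ≤ ‖F‖ * ‖e j‖ := F.le_opNorm _
          _ = ‖F‖ := by rw [e_norm, mul_one]) hε
  set x : ell1 := e j - e k with hx
  have hxnorm : ‖x‖ ≤ 2 := by
    calc ‖x‖ ≤ ‖e j‖ + ‖e k‖ := norm_sub_le _ _
      _ = 2 := by rw [e_norm, e_norm]; norm_num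
  have hFx : ‖F x‖ < ε := by
    calc ‖F x‖ = ‖F (e j) - F (e k)‖ := by rw [hx, map_sub]
      _ < ε := hclose
  have hval : (↑((σ - F) x) : ellInf) j = 1 - (↑(F x) : ellInf) j := by
    rw [ContinuousLinearMap.sub_apply, Submodule.coe_sub, lp.coeFn_sub, Pi.sub_apply,
      sigma_e_sub σ hσ hjk]
  have h1 : |(↑((σ - F) x) : ellInf) j| ≤ ‖(σ - F) x‖ := by
    have := lp.norm_apply_le_norm ENNReal.top_ne_zero ((((σ - F) x : cSpace)) : ellInf) j
    rwa [Real.norm_eq_abs] at this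
  have h2 : |(↑(F x) : ellInf) j| ≤ ‖F x‖ := by
    have := lp.norm_apply_le_norm ENNReal.top_ne_zero ((F x : cSpace) : ellInf) j
    rwa [Real.norm_eq_abs] at this
  have h3 : 1 - ε ≤ |(↑((σ - F) x) : ellInf) j| := by
    rw [hval]
    have habs : 1 - |(↑(F x) : ellInf) j| ≤ |1 - (↑(F x) : ellInf) j| := by
      have h5 := abs_sub_abs_le_abs_sub (1:ℝ) ((↑(F x) : ellInf) j)
      simpa using h5
    linarith [h2, hFx.le]
  have h4 : ‖(σ - F) x‖ ≤ ‖σ - F‖ * 2 :=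
    ((σ - F).le_opNorm x).trans
      (mul_le_mul_of_nonneg_left hxnorm (norm_nonneg (σ - F)))
  have h5 := h3.trans (h1.trans h4)
  linarith

theorem approximation_number_summation (n : ℕ) (hn : 2 ≤ n)
    (σ : ell1 →L[ℝ] cSpace) (hσ : IsSummation σ) :
    sInf {r : ℝ | ∃ F : ell1 →L[ℝ] cSpace,
        LinearMap.rank (F : ell1 →ₗ[ℝ] cSpace) < (n : Cardinal) ∧ r = ‖σ - F‖} = 1 / 2 := by
  set S := {r : ℝ | ∃ F : ell1 →L[ℝ] cSpace,
      LinearMap.rank (F : ell1 →ₗ[ℝ] cSpace) < (n : Cardinal) ∧ r = ‖σ - F‖}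
  have hrankG : LinearMap.rank (Gop : ell1 →ₗ[ℝ] cSpace) < (n : Cardinal) := by
    have hle : LinearMap.range (Gop : ell1 →ₗ[ℝ] cSpace)
        ≤ Submodule.span ℝ {((1:ℝ)/2) • constOne} := by
      rintro y ⟨x, rfl⟩
      exact Submodule.smul_mem _ _ (Submodule.subset_span rfl)
    calc LinearMap.rank (Gop : ell1 →ₗ[ℝ] cSpace)
        ≤ Module.rank ℝ (Submodule.span ℝ {((1:ℝ)/2) • constOne}) := Submodule.rank_mono hle
      _ ≤ 1 := by simpa using rank_span_le (R := ℝ) {((1:ℝ)/2) • constOne}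
      _ < (n : Cardinal) := by
          have h1n : ((1:ℕ) : Cardinal.{0}) < ((n:ℕ) : Cardinal.{0}) :=
            Nat.cast_lt.mpr (lt_of_lt_of_le one_lt_two hn)
          simpa using h1n
  have hmem : ‖σ - Gop‖ ∈ S := ⟨Gop, hrankG, rfl⟩
  have hne : S.Nonempty := ⟨_, hmem⟩
  have hlb : ∀ r ∈ S, 1/2 ≤ r := by
    rintro r ⟨F, hF, rfl⟩
    exact lower_bound σ hσ F (hF.trans (Cardinal.nat_lt_aleph0 n))
  refine le_antisymm ?_ (le_csInf hne hlb)
  exact csInf_le_of_le ⟨1/2, hlb⟩ hmem (Gop_norm_le σ hσ)
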